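/- Every non-dyadic integer interval J can be written as a disjoint union J = J¹ ∪ J² of two intervals of positive length such that there exist disjoint dyadic intervals I¹, I² with Jⁱ ⊆ Iⁱ and |Jⁱ| > (1/2)·|Iⁱ| for i = 1, 2. -/

import Mathlib

/-- Every non-dyadic integer interval `J = [a, b]` splits at some interior
point `x` into `J¹ = [a, x]` and `J² = [x, b]`, both of positive length, such that there
exist dyadic intervals `I¹ = [k₁·2^{j₁}, (k₁+1)·2^{j₁}]` and `I² = [k₂·2^{j₂}, (k₂+1)·2^{j₂}]`
with disjoint interiors, `Jⁱ ⊆ Iⁱ`, and `|Jⁱ| > (1/2)|Iⁱ|` for `i = 1, 2`. -/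
theorem stmt10 (a b : ℕ) (hab : a < b)
    (hnd : ¬ ∃ j k : ℕ, a = k * 2 ^ j ∧ b = (k + 1) * 2 ^ j) :
    ∃ x : ℕ, a < x ∧ x < b ∧
      ∃ j₁ k₁ j₂ k₂ : ℕ,
        -- J¹ = [a, x] ⊆ I¹, J² = [x, b] ⊆ I²
        k₁ * 2 ^ j₁ ≤ a ∧ x ≤ (k₁ + 1) * 2 ^ j₁ ∧
        k₂ * 2 ^ j₂ ≤ x ∧ b ≤ (k₂ + 1) * 2 ^ j₂ ∧
        -- I¹ and I² have disjoint interiors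
        ((k₁ + 1) * 2 ^ j₁ ≤ k₂ * 2 ^ j₂ ∨ (k₂ + 1) * 2 ^ j₂ ≤ k₁ * 2 ^ j₁) ∧
        -- |Jⁱ| > (1/2)|Iⁱ|
        2 ^ j₁ < 2 * (x - a) ∧ 2 ^ j₂ < 2 * (b - x) := by
  haveI : Fact (Nat.Prime 2) := ⟨Nat.prime_two⟩
  have hb2 : a + 2 ≤ b := by
    rcases Nat.lt_or_ge (a + 1) b with h | h
    · omega
    · exact absurd ⟨0, a, by omega, by omega⟩ hnd
  obtain ⟨x, hx, hmax⟩ := Finset.exists_max_image (Finset.Ioo a b)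
    (padicValNat 2) ⟨a + 1, by simp only [Finset.mem_Ioo]; omega⟩
  simp only [Finset.mem_Ioo] at hx
  set j := padicValNat 2 x with hj
  have hx1 : 1 ≤ x := by omega
  have hpj : 1 ≤ 2 ^ j := Nat.one_le_two_pow
  obtain ⟨m, hm⟩ : 2 ^ j ∣ x := pow_padicValNat_dvd
  have hm1 : m ≠ 0 := by rintro rfl; simp at hm; omega
  obtain ⟨n, rfl⟩ : ∃ n, m = n + 1 := ⟨m - 1, by omega⟩
  have hx' : x = 2 ^ j * n + 2 ^ j := by rw [hm]; ring
  have hmodd : ¬ 2 ∣ (n + 1) := by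
    rintro ⟨c, hc⟩
    have hd : 2 ^ (j + 1) ∣ x := ⟨c, by rw [hm, hc]; ring⟩
    have := (padicValNat_dvd_iff_le (p := 2) (by omega)).mp hd
    omega
  have key₁ : x ≤ a + 2 ^ j := by
    by_contra h
    push_neg at h
    have hy : 2 ^ j * n ∈ Finset.Ioo a b := by
      simp only [Finset.mem_Ioo]; omega
    have hyv := hmax _ hy
    have hd : 2 ^ (j + 1) ∣ 2 ^ j * n := by
      obtain ⟨c, hc⟩ : 2 ∣ n := by omega
      exact ⟨c, by rw [hc]; ring⟩
    have := (padicValNat_dvd_iff_le (p := 2) (a := 2 ^ j * n) (by omega)).mp hd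
    omega
  have key₂ : b ≤ x + 2 ^ j := by
    by_contra h
    push_neg at h
    have he : 2 ^ j * (n + 2) = x + 2 ^ j := by rw [hx']; ring
    have hy : 2 ^ j * (n + 2) ∈ Finset.Ioo a b := by
      simp only [Finset.mem_Ioo]; omega
    have hyv := hmax _ hy
    have hd : 2 ^ (j + 1) ∣ 2 ^ j * (n + 2) := by
      obtain ⟨c, hc⟩ : 2 ∣ n + 2 := by omega
      exact ⟨c, by rw [hc]; ring⟩
    have := (padicValNat_dvd_iff_le (p := 2) (a := 2 ^ j * (n + 2)) (by omega)).mp hd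
    omega
  refine ⟨x, hx.1, hx.2, ?_⟩
  -- side 1
  set d₁ := x - a with hd₁
  set j₁ := Nat.clog 2 d₁ with hj₁
  have hd₁pos : 1 ≤ d₁ := by omega
  have hpj1 : 1 ≤ 2 ^ j₁ := Nat.one_le_two_pow
  have h1le : d₁ ≤ 2 ^ j₁ := Nat.le_pow_clog (by norm_num) d₁
  have h1lt : 2 ^ j₁ < 2 * d₁ := by
    rcases Nat.lt_or_ge d₁ 2 with h | h
    · have : d₁ = 1 := by omega
      rw [this] at hj₁ ⊢
      simp [hj₁]
    · have hpred : 2 ^ (j₁ - 1) < d₁ := Nat.pow_pred_clog_lt_self (by norm_num) h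
      have hj1pos : 1 ≤ j₁ := Nat.clog_pos (by norm_num) h
      have : 2 ^ j₁ = 2 * 2 ^ (j₁ - 1) := by
        rw [← pow_succ']; congr 1; omega
      omega
  have hj₁le : j₁ ≤ j := by
    rw [hj₁, Nat.clog_le_iff_le_pow (by norm_num)]
    omega
  obtain ⟨q, hq⟩ : 2 ^ j₁ ∣ x := dvd_trans (pow_dvd_pow 2 hj₁le) ⟨n + 1, hm⟩
  have hq1 : q ≠ 0 := by rintro rfl; simp at hq; omega
  obtain ⟨p, rfl⟩ : ∃ p, q = p + 1 := ⟨q - 1, by omega⟩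
  have hq' : x = 2 ^ j₁ * p + 2 ^ j₁ := by rw [hq]; ring
  have hq'' : (p + 1) * 2 ^ j₁ = 2 ^ j₁ * p + 2 ^ j₁ := by ring
  have hq''' : p * 2 ^ j₁ = 2 ^ j₁ * p := by ring
  -- side 2
  set d₂ := b - x with hd₂
  set j₂ := Nat.clog 2 d₂ with hj₂
  have hd₂pos : 1 ≤ d₂ := by omega
  have hpj2 : 1 ≤ 2 ^ j₂ := Nat.one_le_two_pow
  have h2le : d₂ ≤ 2 ^ j₂ := Nat.le_pow_clog (by norm_num) d₂
  have h2lt : 2 ^ j₂ < 2 * d₂ := by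
    rcases Nat.lt_or_ge d₂ 2 with h | h
    · have : d₂ = 1 := by omega
      rw [this] at hj₂ ⊢
      simp [hj₂]
    · have hpred : 2 ^ (j₂ - 1) < d₂ := Nat.pow_pred_clog_lt_self (by norm_num) h
      have hj2pos : 1 ≤ j₂ := Nat.clog_pos (by norm_num) h
      have : 2 ^ j₂ = 2 * 2 ^ (j₂ - 1) := by
        rw [← pow_succ']; congr 1; omega
      omega
  have hj₂le : j₂ ≤ j := by
    rw [hj₂, Nat.clog_le_iff_le_pow (by norm_num)]
    omega
  obtain ⟨r, hr⟩ : 2 ^ j₂ ∣ x := dvd_trans (pow_dvd_pow 2 hj₂le) ⟨n + 1, hm⟩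
  have hr' : r * 2 ^ j₂ = x := by rw [hr]; ring
  have hr'' : (r + 1) * 2 ^ j₂ = x + 2 ^ j₂ := by rw [hr]; ring
  exact ⟨j₁, p, j₂, r, by omega, by omega, by omega, by omega, Or.inl (by omega),
    h1lt, h2lt⟩
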